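/- Soft policy evaluation is dominated by soft optimality: let π be any policy with π(a|s) > 0 for all s ∈ S and a ∈ A_p and Σ_{a∈A_p} π(a|s) = 1 (so that proj_p(π) = π on A_p), let Q̄^π : S × A_p → ℝ be the fixed point of the top-p soft Bellman operator B_p^π, and let Q̄⋆_p : S × A_p → ℝ be the fixed point of the top-p soft Bellman optimality operator (T Q)(s,a) = r(s,a) + γ Σ_{s'∈S} P(s'|s,a) · log Σ_{a'∈A_p} exp(Q(s',a')). Then Q̄^π(s,a) ≤ Q̄⋆_p(s,a) for all s ∈ S and a ∈ A_p. -/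

import Mathlib

/-- Soft policy evaluation is dominated by soft optimality: for any
policy `π` supported on `A_p` (i.e. `π(a|s) > 0` on `A_p` and `Σ_{a∈A_p} π(a|s) = 1`),
the fixed point `Q̄^π` of the top-p soft Bellman operator `B_p^π` satisfies
`Q̄^π(s,a) ≤ Q̄⋆_p(s,a)` for all `s ∈ S`, `a ∈ A_p`, where `Q̄⋆_p` is the fixed point
of the top-p soft Bellman optimality operator. -/
theorem soft_policy_evaluation_le_optimality
    {S A : Type} [Fintype S] [Fintype A] [Nonempty S] [Nonempty A]
    (P : S → A → S → ℝ)
    (hP0 : ∀ s a s', 0 ≤ P s a s')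
    (hP1 : ∀ s a, ∑ s', P s a s' = 1)
    (r : S → A → ℝ) (γ : ℝ) (hγ0 : 0 ≤ γ) (hγ1 : γ < 1)
    (Ap : Finset A) (hAp : Ap.Nonempty)
    (π : S → A → ℝ)
    (hπpos : ∀ s, ∀ a ∈ Ap, 0 < π s a)
    (hπ1 : ∀ s, ∑ a ∈ Ap, π s a = 1)
    (Qπ : S → A → ℝ)
    (hQπ : ∀ s, ∀ a ∈ Ap, Qπ s a = r s a + γ * ∑ s', P s a s' *
        ∑ a' ∈ Ap, π s' a' * (Qπ s' a' - Real.log (π s' a')))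
    (QbarStar : S → A → ℝ)
    (hQbarStar : ∀ s, ∀ a ∈ Ap, QbarStar s a = r s a + γ * ∑ s', P s a s' *
        Real.log (∑ a' ∈ Ap, Real.exp (QbarStar s' a'))) :
    ∀ s, ∀ a ∈ Ap, Qπ s a ≤ QbarStar s a := by
  -- Gibbs inequality
  have gibbs : ∀ (p Q : A → ℝ), (∀ a ∈ Ap, 0 < p a) → (∑ a ∈ Ap, p a = 1) →
      ∑ a ∈ Ap, p a * (Q a - Real.log (p a)) ≤ Real.log (∑ a ∈ Ap, Real.exp (Q a)) := by
    intro p Q hp hp1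
    have hZ : 0 < ∑ a ∈ Ap, Real.exp (Q a) :=
      Finset.sum_pos (fun a _ => Real.exp_pos _) hAp
    set Z := ∑ a ∈ Ap, Real.exp (Q a) with hZdef
    have key : ∀ a ∈ Ap, p a * (Q a - Real.log (p a)) - p a * Real.log Z ≤
        Real.exp (Q a) / Z - p a := by
      intro a ha
      have hpa := hp a ha
      have hx : 0 < Real.exp (Q a) / (p a * Z) := by positivity
      have hlog := Real.log_le_sub_one_of_pos hx
      have hlogeq : Real.log (Real.exp (Q a) / (p a * Z)) =
          Q a - Real.log (p a) - Real.log Z := by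
        rw [Real.log_div (Real.exp_ne_zero _) (by positivity), Real.log_exp,
          Real.log_mul (ne_of_gt hpa) (ne_of_gt hZ)]
        ring
      have h2 := mul_le_mul_of_nonneg_left hlog hpa.le
      rw [hlogeq] at h2
      have heq : p a * (Real.exp (Q a) / (p a * Z) - 1) = Real.exp (Q a) / Z - p a := by
        field_simp
      rw [heq] at h2
      linarith
    calc ∑ a ∈ Ap, p a * (Q a - Real.log (p a))
        = (∑ a ∈ Ap, (p a * (Q a - Real.log (p a)) - p a * Real.log Z)) + Real.log Z := by
          rw [Finset.sum_sub_distrib, ← Finset.sum_mul, hp1]; ring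
      _ ≤ (∑ a ∈ Ap, (Real.exp (Q a) / Z - p a)) + Real.log Z :=
          add_le_add_left (Finset.sum_le_sum key) _
      _ = Real.log Z := by
          rw [Finset.sum_sub_distrib, ← Finset.sum_div, hp1]
          field_simp
          linarith [hZdef]
  -- maximum of the difference
  obtain ⟨⟨s0, a0⟩, hmem, hmax⟩ := Finset.exists_max_image (Finset.univ ×ˢ Ap)
      (fun q => Qπ q.1 q.2 - QbarStar q.1 q.2)
      (Finset.Nonempty.product Finset.univ_nonempty hAp)
  rw [Finset.mem_product] at hmem
  set M := Qπ s0 a0 - QbarStar s0 a0 with hMdef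
  have hM : ∀ s, ∀ a ∈ Ap, Qπ s a - QbarStar s a ≤ M := by
    intro s a ha
    exact hmax (s, a) (Finset.mem_product.2 ⟨Finset.mem_univ _, ha⟩)
  -- key contraction: M ≤ γ * M
  have hinner : ∀ s', (∑ a' ∈ Ap, π s' a' * (Qπ s' a' - Real.log (π s' a'))) -
      Real.log (∑ a' ∈ Ap, Real.exp (QbarStar s' a')) ≤ M := by
    intro s'
    have h1 := gibbs (π s') (Qπ s') (hπpos s') (hπ1 s')
    have h2 : Real.log (∑ a' ∈ Ap, Real.exp (Qπ s' a')) ≤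
        M + Real.log (∑ a' ∈ Ap, Real.exp (QbarStar s' a')) := by
      have hsum : (∑ a' ∈ Ap, Real.exp (Qπ s' a')) ≤
          ∑ a' ∈ Ap, Real.exp (QbarStar s' a' + M) := by
        apply Finset.sum_le_sum
        intro a' ha'
        exact Real.exp_le_exp.2 (by linarith [hM s' a' ha'])
      have heq : (∑ a' ∈ Ap, Real.exp (QbarStar s' a' + M)) =
          Real.exp M * ∑ a' ∈ Ap, Real.exp (QbarStar s' a') := by
        rw [Finset.mul_sum]
        exact Finset.sum_congr rfl fun a' _ => by rw [Real.exp_add]; ring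
      have hZ : 0 < ∑ a' ∈ Ap, Real.exp (QbarStar s' a') :=
        Finset.sum_pos (fun a _ => Real.exp_pos _) hAp
      calc Real.log (∑ a' ∈ Ap, Real.exp (Qπ s' a'))
          ≤ Real.log (Real.exp M * ∑ a' ∈ Ap, Real.exp (QbarStar s' a')) := by
            apply Real.log_le_log (Finset.sum_pos (fun a _ => Real.exp_pos _) hAp)
            rw [← heq]; exact hsum
        _ = M + Real.log (∑ a' ∈ Ap, Real.exp (QbarStar s' a')) := by
            rw [Real.log_mul (Real.exp_ne_zero _) (ne_of_gt hZ), Real.log_exp]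
    linarith
  have hMγ : M ≤ γ * M := by
    have e1 := hQπ s0 a0 hmem.2
    have e2 := hQbarStar s0 a0 hmem.2
    have hstep : M = γ * ∑ s', P s0 a0 s' *
        ((∑ a' ∈ Ap, π s' a' * (Qπ s' a' - Real.log (π s' a'))) -
          Real.log (∑ a' ∈ Ap, Real.exp (QbarStar s' a'))) := by
      rw [hMdef, e1, e2]
      simp only [mul_sub, Finset.sum_sub_distrib]
      ring
    have hsle : (∑ s', P s0 a0 s' *
        ((∑ a' ∈ Ap, π s' a' * (Qπ s' a' - Real.log (π s' a'))) -
          Real.log (∑ a' ∈ Ap, Real.exp (QbarStar s' a')))) ≤ M := by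
      calc (∑ s', P s0 a0 s' * _) ≤ ∑ s', P s0 a0 s' * M := by
            apply Finset.sum_le_sum
            intro s' _
            exact mul_le_mul_of_nonneg_left (hinner s') (hP0 s0 a0 s')
        _ = M := by rw [← Finset.sum_mul, hP1]; ring
    calc M = _ := hstep
      _ ≤ γ * M := mul_le_mul_of_nonneg_left hsle hγ0
  have hM0 : M ≤ 0 := by nlinarith
  intro s a ha
  linarith [hM s a ha]
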